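/- Let H be a complex Hilbert space, γ : H → H a bounded linear operator with γ∘γ = −I and γ* = −γ, and let L ⊆ H be a closed subspace with γ(L) = L^⊥. Then the orthogonal projection of H onto the eigenspace E_i = ker(γ − i·I) restricts to a continuous linear bijection from L onto E_i, and likewise the orthogonal projection onto E_{−i} = ker(γ + i·I) restricts to a continuous linear bijection from L onto E_{−i}. -/

import Mathlib

open Complex

private lemma aux1 {H : Type*} [NormedAddCommGroup H] [InnerProductSpace ℂ H]
    [CompleteSpace H] (γ : H →L[ℂ] H)
    (hsq : γ ∘L γ = -1)
    (hadj : ContinuousLinearMap.adjoint γ = -γ)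
    (L : Submodule ℂ H) (hLclosed : IsClosed (L : Set H)) (hLag : L.map (γ : H →ₗ[ℂ] H) = Lᗮ)
    (ε : ℂ) (hε2 : ε * ε = -1)
    (hconj : (starRingEnd ℂ) ε = -ε)
    (P : H →L[ℂ] H)
    (hPmem : ∀ x, P x ∈ LinearMap.ker (((γ - ε • (1 : H →L[ℂ] H) : H →L[ℂ] H) : H →ₗ[ℂ] H)))
    (hPorth : ∀ x, x - P x ∈ (LinearMap.ker (((γ - ε • (1 : H →L[ℂ] H) : H →L[ℂ] H) : H →ₗ[ℂ] H)))ᗮ) :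
    Set.BijOn P (L : Set H)
      ((LinearMap.ker (((γ - ε • (1 : H →L[ℂ] H) : H →L[ℂ] H) : H →ₗ[ℂ] H)) : Submodule ℂ H) : Set H) := by
  have hεne : ε ≠ 0 := by
    intro h; rw [h, mul_zero] at hε2; exact one_ne_zero (neg_eq_zero.mp hε2.symm)
  set E : Submodule ℂ H := LinearMap.ker (((γ - ε • (1 : H →L[ℂ] H) : H →L[ℂ] H) : H →ₗ[ℂ] H)) with hE
  have hmemE : ∀ x, x ∈ E ↔ γ x = ε • x := by
    intro x
    rw [hE, LinearMap.mem_ker]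
    simp [ContinuousLinearMap.sub_apply, sub_eq_zero]
  have hγγ : ∀ x, γ (γ x) = -x := by
    intro x
    have := ContinuousLinearMap.ext_iff.mp hsq x
    simpa using this
  -- anything in the (-ε)-eigenspace is orthogonal to E
  have horth : ∀ v, γ v = (-ε) • v → v ∈ Eᗮ := by
    intro v hv
    rw [Submodule.mem_orthogonal]
    intro u hu
    have hu' : γ u = ε • u := (hmemE u).mp hu
    have h1 : (-ε) * inner ℂ u v = ε * (inner ℂ u v : ℂ) := by
      calc (-ε) * inner ℂ u v = inner ℂ (γ u) v := by
            rw [hu', inner_smul_left, hconj]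
        _ = inner ℂ u (ContinuousLinearMap.adjoint γ v) :=
            (ContinuousLinearMap.adjoint_inner_right γ u v).symm
        _ = ε * inner ℂ u v := by
            rw [hadj, ContinuousLinearMap.neg_apply, hv, inner_neg_right,
              inner_smul_right, neg_mul, neg_neg]
    have h2 : (2 * ε) * inner ℂ u v = 0 := by linear_combination -h1
    rcases mul_eq_zero.mp h2 with h | h
    · exact absurd h (by simpa using hεne)
    · exact h
  -- the explicit formula for P
  have hPval : ∀ x, P x = (2:ℂ)⁻¹ • (x - ε • γ x) := by
    intro x
    set q : H := (2:ℂ)⁻¹ • (x - ε • γ x) with hqdef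
    have hq : q ∈ E := by
      rw [hmemE]
      simp only [hqdef, map_smul, map_sub, map_smul, hγγ, smul_sub, smul_smul, hε2,
        neg_smul, one_smul, sub_neg_eq_add, neg_neg]
      match_scalars <;>
        first
          | ring1
          | linear_combination ((1:ℂ)/2) * hε2
          | linear_combination (-(1:ℂ)/2) * hε2
    have hxq : x - q ∈ Eᗮ := by
      apply horth
      simp only [hqdef, map_sub, map_smul, map_sub, map_smul, hγγ, smul_sub, smul_smul,
        hε2, neg_smul, one_smul, sub_neg_eq_add, neg_neg]
      match_scalars <;>
        first
          | ring1
          | linear_combination ((1:ℂ)/2) * hε2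
          | linear_combination (-(1:ℂ)/2) * hε2
    have hd : P x - q ∈ E := E.sub_mem (hPmem x) hq
    have hd' : P x - q ∈ Eᗮ := by
      have := Eᗮ.sub_mem hxq (hPorth x)
      simpa using this
    have : inner ℂ (P x - q) (P x - q) = (0:ℂ) :=
      (Submodule.mem_orthogonal _ _).mp hd' _ hd
    have := inner_self_eq_zero.mp this
    rw [sub_eq_zero] at this
    exact this
  -- vectors in L in the (-ε)-eigenspace vanish
  have hinj0 : ∀ x ∈ L, γ x = (-ε) • x → x = 0 := by
    intro x hx hx'
    have hγx : γ x ∈ Lᗮ := hLag ▸ Submodule.mem_map_of_mem hx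
    have h0 : inner ℂ x (γ x) = (0:ℂ) := (Submodule.mem_orthogonal _ _).mp hγx x hx
    rw [hx', inner_smul_right] at h0
    rcases mul_eq_zero.mp h0 with h | h
    · exact absurd h (by simpa using hεne)
    · exact inner_self_eq_zero.mp h
  refine ⟨?_, ?_, ?_⟩
  · intro x _
    exact hPmem x
  · intro x hx y hy hxy
    have hd : x - y ∈ L := L.sub_mem hx hy
    have hP0 : P (x - y) = 0 := by rw [map_sub, hxy, sub_self]
    rw [hPval] at hP0
    have h1 : (x - y) - ε • γ (x - y) = 0 := by
      rcases smul_eq_zero.mp hP0 with h | h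
      · norm_num at h
      · exact h
    have h2 : x - y = ε • γ (x - y) := by rwa [sub_eq_zero] at h1
    have h3 : γ (x - y) = (-ε) • (x - y) := by
      conv_lhs => rw [h2]
      rw [map_smul, hγγ, smul_neg, neg_smul]
    have := hinj0 _ hd h3
    rwa [sub_eq_zero] at this
  · intro u hu
    have hu' : γ u = ε • u := (hmemE u).mp hu
    haveI : CompleteSpace L := hLclosed.completeSpace_coe
    set a : H := ↑(L.orthogonalProjectionOnto u) with ha
    have haL : a ∈ L := SetLike.coe_mem _
    have hbmem : u - a ∈ Lᗮ := Submodule.sub_starProjection_mem_orthogonal (K := L) u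
    rw [← hLag] at hbmem
    obtain ⟨c, hcL, hgc : γ c = u - a⟩ := hbmem
    have hga : γ a = ε • u + c := by
      have h1 : γ u = γ a - c := by
        have hu2 : u = a + γ c := by rw [hgc]; abel
        conv_lhs => rw [hu2]
        rw [map_add, hγγ]; abel
      rw [hu'] at h1
      rw [h1]; abel
    refine ⟨a + ε • c, L.add_mem haL (L.smul_mem ε hcL), ?_⟩
    have hgx : γ (a + ε • c) = ε • u + c + ε • (u - a) := by
      rw [map_add, map_smul, hga, hgc]
    rw [hPval, hgx]
    match_scalars <;>
      first
        | ring1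
        | linear_combination ((1:ℂ)/2) * hε2
        | linear_combination (-(1:ℂ)/2) * hε2
        | linear_combination hε2
        | linear_combination -hε2

theorem statement1 {H : Type*} [NormedAddCommGroup H] [InnerProductSpace ℂ H]
    [CompleteSpace H] (γ : H →L[ℂ] H)
    (hsq : γ ∘L γ = -1)
    (hadj : ContinuousLinearMap.adjoint γ = -γ)
    (L : Submodule ℂ H) (hLclosed : IsClosed (L : Set H)) (hLag : L.map (γ : H →ₗ[ℂ] H) = Lᗮ) :
    (∀ Pi : H →L[ℂ] H,
        (∀ x, Pi x ∈ LinearMap.ker (((γ - Complex.I • (1 : H →L[ℂ] H) : H →L[ℂ] H) : H →ₗ[ℂ] H))) →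
        (∀ x, x - Pi x ∈ (LinearMap.ker (((γ - Complex.I • (1 : H →L[ℂ] H) : H →L[ℂ] H) : H →ₗ[ℂ] H)))ᗮ) →
        Set.BijOn Pi (L : Set H)
          ((LinearMap.ker (((γ - Complex.I • (1 : H →L[ℂ] H) : H →L[ℂ] H) : H →ₗ[ℂ] H)) : Submodule ℂ H) : Set H)) ∧
    (∀ Pmi : H →L[ℂ] H,
        (∀ x, Pmi x ∈ LinearMap.ker (((γ + Complex.I • (1 : H →L[ℂ] H) : H →L[ℂ] H) : H →ₗ[ℂ] H))) →
        (∀ x, x - Pmi x ∈ (LinearMap.ker (((γ + Complex.I • (1 : H →L[ℂ] H) : H →L[ℂ] H) : H →ₗ[ℂ] H)))ᗮ) →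
        Set.BijOn Pmi (L : Set H)
          ((LinearMap.ker (((γ + Complex.I • (1 : H →L[ℂ] H) : H →L[ℂ] H) : H →ₗ[ℂ] H)) : Submodule ℂ H) : Set H)) := by
  constructor
  · intro Pi h1 h2
    exact aux1 γ hsq hadj L hLclosed hLag Complex.I Complex.I_mul_I Complex.conj_I Pi h1 h2
  · intro Pmi h1 h2
    have key := aux1 γ hsq hadj L hLclosed hLag (-Complex.I)
      (by simpa using Complex.I_mul_I) (by simp [Complex.conj_I]) Pmi
    simp only [neg_smul, sub_neg_eq_add] at key
    exact key h1 h2
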